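/- Let L be a Moufang loop of class at most 2. Then [c,d,e]⁶ = 1 for all c, d, e ∈ L. Consequently, the nuclearly-derived subloop L* of L (the smallest normal subloop of L whose quotient is a group, which here equals the subloop generated by all associators) is an abelian group of exponent dividing 6. -/
import Mathlib


/-- An inverse property loop: a set with multiplication, identity, and two-sided
inverses satisfying `a⁻¹(ax) = x = (xa)a⁻¹`. -/
class IPLoop (L : Type*) extends Mul L, One L, Inv L where
  one_mul : ∀ a : L, 1 * a = a
  mul_one : ∀ a : L, a * 1 = a
  inv_mul_cancel_left : ∀ a x : L, a⁻¹ * (a * x) = x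
  mul_inv_cancel_right : ∀ a x : L, (x * a) * a⁻¹ = x

namespace IPLoop

variable {L : Type*} [IPLoop L]

/-- Powers with natural number exponent, `c^(n+1) = c * c^n`. -/
def npow (c : L) : ℕ → L
  | 0 => 1
  | n + 1 => c * npow c n

instance : Pow L ℕ := ⟨npow⟩

/-- Powers with integer exponent. -/
def zpow (c : L) : ℤ → L
  | Int.ofNat n => c ^ n
  | Int.negSucc n => (c ^ (n + 1))⁻¹

instance : Pow L ℤ := ⟨zpow⟩

/-- The commutator `[c,d] = (dc)⁻¹(cd)`. -/
def comm (c d : L) : L := (d * c)⁻¹ * (c * d)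

/-- The associator `[c,d,e] = (c(de))⁻¹((cd)e)`. -/
def assoc (c d e : L) : L := (c * (d * e))⁻¹ * ((c * d) * e)

/-- Membership in the center `Z(L)`. -/
def inCenter (z : L) : Prop :=
  (∀ x : L, comm z x = 1) ∧
  ∀ x y : L, assoc z x y = 1 ∧ assoc x z y = 1 ∧ assoc x y z = 1

/-- The Moufang identity `((dc)e)c = d(c(ec))`. -/
def IsMoufang (L : Type*) [IPLoop L] : Prop :=
  ∀ c d e : L, ((d * c) * e) * c = d * (c * (e * c))

/-- A loop is of (central nilpotence) class at most 2 if every commutator and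
every associator lies in the center. -/
def ClassTwo (L : Type*) [IPLoop L] : Prop :=
  (∀ c d : L, inCenter (comm c d)) ∧ ∀ c d e : L, inCenter (assoc c d e)

/-- The order of an element: least `n > 0` with `c^n = 1` (or `0` if none). -/
noncomputable def ordOf (c : L) : ℕ := sInf {n : ℕ | 0 < n ∧ c ^ n = 1}

/-- The subloop generated by a subset `S`. -/
def subloopClosure (S : Set L) : Set L :=
  ⋂₀ {T : Set L | (1 : L) ∈ T ∧ (∀ x ∈ T, x⁻¹ ∈ T) ∧
      (∀ x ∈ T, ∀ y ∈ T, x * y ∈ T) ∧ S ⊆ T}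

end IPLoop

namespace SAux
open IPLoop
variable {L : Type*} [IPLoop L]

theorem mlc {a x y : L} (h : a * x = a * y) : x = y := by
  have h2 := congrArg (fun t => a⁻¹ * t) h
  simpa [IPLoop.inv_mul_cancel_left] using h2

theorem mrc {a x y : L} (h : x * a = y * a) : x = y := by
  have h2 := congrArg (fun t => t * a⁻¹) h
  simpa [IPLoop.mul_inv_cancel_right] using h2

theorem mul_inv (a : L) : a * a⁻¹ = 1 := by
  have := IPLoop.mul_inv_cancel_right a (1 : L)
  rwa [IPLoop.one_mul] at this

theorem inv_mul (a : L) : a⁻¹ * a = 1 := by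
  have := IPLoop.inv_mul_cancel_left a (1 : L)
  rwa [IPLoop.mul_one] at this

theorem inv_inv (a : L) : a⁻¹⁻¹ = a := by
  apply mlc (a := a⁻¹); rw [mul_inv, inv_mul]

theorem micl (a x : L) : a * (a⁻¹ * x) = x := by
  have := IPLoop.inv_mul_cancel_left a⁻¹ x
  rwa [inv_inv] at this

theorem imcr (a x : L) : (x * a⁻¹) * a = x := by
  have := IPLoop.mul_inv_cancel_right a⁻¹ x
  rwa [inv_inv] at this

theorem eq_of_inv_mul {a b : L} (h : a⁻¹ * b = 1) : a = b := by
  have h2 := congrArg (fun t => a * t) h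
  simpa [micl, IPLoop.mul_one] using h2.symm

theorem inv_of_mul_one {a b : L} (h : a * b = 1) : b = a⁻¹ := by
  have h2 := congrArg (fun t => a⁻¹ * t) h
  simpa [IPLoop.inv_mul_cancel_left, IPLoop.mul_one] using h2

theorem one_inv : (1 : L)⁻¹ = 1 :=
  (inv_of_mul_one (by rw [IPLoop.one_mul])).symm

theorem mul_inv_rev (a b : L) : (a * b)⁻¹ = b⁻¹ * a⁻¹ := by
  have h1 : b * (b⁻¹ * a⁻¹) = a⁻¹ := micl b a⁻¹
  have h2 : b = a⁻¹ * (b⁻¹ * a⁻¹)⁻¹ := by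
    have := congrArg (fun t => t * (b⁻¹ * a⁻¹)⁻¹) h1
    simpa [IPLoop.mul_inv_cancel_right] using this
  have h3 : a * b = (b⁻¹ * a⁻¹)⁻¹ := by
    simpa [micl] using congrArg (fun t => a * t) h2
  rw [h3, inv_inv]

theorem assoc_eq (x y z : L) : (x * y) * z = (x * (y * z)) * IPLoop.assoc x y z := by
  show _ = (x * (y * z)) * ((x * (y * z))⁻¹ * ((x * y) * z))
  rw [micl]

theorem assoc_char {x y z w : L} (h : (x * y) * z = (x * (y * z)) * w) :
    IPLoop.assoc x y z = w :=
  mlc ((assoc_eq x y z).symm.trans h)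

theorem assoc_one' {x y z : L} (h : (x * y) * z = x * (y * z)) :
    IPLoop.assoc x y z = 1 :=
  assoc_char (by rw [IPLoop.mul_one]; exact h)

theorem comm_eq (x y : L) : x * y = (y * x) * IPLoop.comm x y := by
  show _ = (y * x) * ((y * x)⁻¹ * (x * y))
  rw [micl]

theorem comm_char {x y w : L} (h : x * y = (y * x) * w) : IPLoop.comm x y = w :=
  mlc ((comm_eq x y).symm.trans h)

theorem comm_one' {x y : L} (h : x * y = y * x) : IPLoop.comm x y = 1 :=
  comm_char (by rw [IPLoop.mul_one]; exact h)

/- ### central element calculus -/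

theorem c_comm {k : L} (hk : inCenter k) (x : L) : x * k = k * x :=
  eq_of_inv_mul (hk.1 x)

theorem c_a1 {k : L} (hk : inCenter k) (x y : L) : (k * x) * y = k * (x * y) := by
  have h := (hk.2 x y).1
  rw [assoc_eq k x y, h, IPLoop.mul_one]

theorem c_a2 {k : L} (hk : inCenter k) (x y : L) : (x * k) * y = x * (k * y) := by
  have h := (hk.2 x y).2.1
  rw [assoc_eq x k y, h, IPLoop.mul_one]

theorem c_a3 {k : L} (hk : inCenter k) (x y : L) : (x * y) * k = x * (y * k) := by
  have h := (hk.2 x y).2.2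
  rw [assoc_eq x y k, h, IPLoop.mul_one]

theorem ck1 {k : L} (hk : inCenter k) (x y : L) : (x * k) * y = (x * y) * k := by
  rw [c_a2 hk, ← c_comm hk y, ← c_a3 hk]

theorem swapc {k : L} (hk : inCenter k) (x w : L) : x * (k * w) = k * (x * w) := by
  rw [← c_a2 hk, c_comm hk x, c_a1 hk]

theorem cswap {k c : L} (hk : inCenter k) (hc : inCenter c) (v : L) :
    (v * c) * k = (v * k) * c := by
  rw [c_a3 hk, c_comm hk c, ← c_a3 hc]

theorem c_inv {k : L} (hk : inCenter k) : inCenter k⁻¹ := by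
  have hcomm : ∀ x : L, x * k⁻¹ = k⁻¹ * x := by
    intro x
    have h := c_comm hk x⁻¹
    have h2 := congrArg (fun t => t⁻¹) h
    simp only [mul_inv_rev, inv_inv] at h2
    exact h2.symm
  have a1 : ∀ x y : L, (k⁻¹ * x) * y = k⁻¹ * (x * y) := by
    intro x y
    apply mlc (a := k)
    rw [← c_a1 hk, micl, micl]
  have a2 : ∀ x y : L, (x * k⁻¹) * y = x * (k⁻¹ * y) := by
    intro x y
    apply mrc (a := k)
    rw [c_a3 hk (x * k⁻¹) y, c_comm hk y, ← c_a2 hk (x * k⁻¹) y, imcr k x,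
      c_a3 hk x (k⁻¹ * y), ← hcomm y, imcr k y]
  have a3 : ∀ x y : L, (x * y) * k⁻¹ = x * (y * k⁻¹) := by
    intro x y
    apply mrc (a := k)
    rw [imcr, c_a3 hk, imcr]
  refine ⟨fun x => ?_, fun x y => ⟨assoc_one' (a1 x y), assoc_one' (a2 x y),
    assoc_one' (a3 x y)⟩⟩
  exact comm_one' (hcomm x).symm

theorem c_one : inCenter (1 : L) := by
  refine ⟨fun x => comm_one' (by rw [IPLoop.one_mul, IPLoop.mul_one]),
    fun x y => ⟨assoc_one' (by rw [IPLoop.one_mul, IPLoop.one_mul]),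
      assoc_one' (by rw [IPLoop.mul_one, IPLoop.one_mul]),
      assoc_one' (by rw [IPLoop.mul_one, IPLoop.mul_one])⟩⟩

theorem c_mul {k1 k2 : L} (h1 : inCenter k1) (h2 : inCenter k2) :
    inCenter (k1 * k2) := by
  have hcomm : ∀ x : L, x * (k1 * k2) = (k1 * k2) * x := by
    intro x
    rw [← c_a3 h2, c_comm h1 x, c_a1 h1, c_comm h2 x, ← c_a1 h1]
  have a1 : ∀ x y : L, ((k1 * k2) * x) * y = (k1 * k2) * (x * y) := by
    intro x y
    rw [c_a1 h1 k2 x, c_a1 h1, c_a1 h2, ← c_a1 h1]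
  have a2 : ∀ x y : L, (x * (k1 * k2)) * y = x * ((k1 * k2) * y) := by
    intro x y
    rw [← c_a3 h2 x k1, c_a2 h2, c_a2 h1, c_a1 h1]
  have a3 : ∀ x y : L, (x * y) * (k1 * k2) = x * (y * (k1 * k2)) := by
    intro x y
    rw [← c_a3 h2 (x*y) k1, c_a3 h1, c_a3 h2, ← c_a3 h2 y k1]
  exact ⟨fun x => comm_one' (hcomm x).symm,
    fun x y => ⟨assoc_one' (a1 x y), assoc_one' (a2 x y), assoc_one' (a3 x y)⟩⟩

/- ### Moufang consequences -/

theorem flex (hM : IsMoufang L) (c e : L) : (c * e) * c = c * (e * c) := by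
  have := hM c 1 e
  rwa [IPLoop.one_mul, IPLoop.one_mul] at this

theorem star (hM : IsMoufang L) (h2 : ClassTwo L) (c d e : L) :
    IPLoop.assoc d (c * e) c = (IPLoop.assoc d c e)⁻¹ := by
  have hA := h2.2 d c e
  have hB := h2.2 d (c * e) c
  have hmo := hM c d e
  rw [assoc_eq d c e, ck1 hA, assoc_eq d (c*e) c, flex hM c e, c_a3 hA] at hmo
  have h1 : (d * (c * (e * c))) * (IPLoop.assoc d (c*e) c * IPLoop.assoc d c e)
      = (d * (c * (e * c))) * 1 := by rw [IPLoop.mul_one]; exact hmo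
  have h0 := mlc h1
  have h3 := congrArg (fun t => t * (IPLoop.assoc d c e)⁻¹) h0
  simpa [IPLoop.mul_inv_cancel_right, IPLoop.one_mul] using h3

theorem I1 (h2 : ClassTwo L) (w x y : L) :
    IPLoop.assoc w (x * y) y⁻¹ = (IPLoop.assoc w x y)⁻¹ := by
  have hA := h2.2 w x y
  have hAi := c_inv hA
  apply assoc_char
  have h1 : ((w*x)*y) * (IPLoop.assoc w x y)⁻¹ = w*(x*y) := by
    rw [assoc_eq w x y]; exact IPLoop.mul_inv_cancel_right _ _
  calc (w*(x*y))*y⁻¹ = (((w*x)*y) * (IPLoop.assoc w x y)⁻¹)*y⁻¹ := by rw [h1]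
    _ = (((w*x)*y)*y⁻¹) * (IPLoop.assoc w x y)⁻¹ := ck1 hAi _ _
    _ = (w*x) * (IPLoop.assoc w x y)⁻¹ := by rw [IPLoop.mul_inv_cancel_right]
    _ = (w*((x*y)*y⁻¹)) * (IPLoop.assoc w x y)⁻¹ := by
        rw [IPLoop.mul_inv_cancel_right]

theorem Mp (hM : IsMoufang L) (h2 : ClassTwo L) (d u c : L) :
    IPLoop.assoc d u c = (IPLoop.assoc d c (c⁻¹ * u))⁻¹ := by
  have := star hM h2 c d (c⁻¹ * u)
  rwa [micl] at this

theorem S3 (hM : IsMoufang L) (h2 : ClassTwo L) (d u c : L) :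
    IPLoop.assoc d u c = IPLoop.assoc d u (u⁻¹ * c) := by
  have h1 := Mp hM h2 d u c
  have h3 := I1 h2 d c (c⁻¹ * u)
  rw [micl, mul_inv_rev, inv_inv] at h3
  rw [h1, ← h3]

theorem S23 (hM : IsMoufang L) (h2 : ClassTwo L) (d u c : L) :
    IPLoop.assoc d u c = (IPLoop.assoc d c u)⁻¹ := by
  rw [Mp hM h2 d u c, S3 hM h2 d c u]

theorem F3 (h2 : ClassTwo L) (x y z : L) :
    IPLoop.assoc z⁻¹ y⁻¹ x⁻¹ = IPLoop.assoc x y z := by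
  have hA := h2.2 x y z
  have hAi := c_inv hA
  apply assoc_char
  have h := assoc_eq x y z
  have h' := congrArg (fun t => t⁻¹) h
  simp only [mul_inv_rev] at h'
  -- h' : z⁻¹*(y⁻¹*x⁻¹) = (assoc x y z)⁻¹ * ((z⁻¹*y⁻¹)*x⁻¹)
  rw [← c_comm hAi ((z⁻¹*y⁻¹)*x⁻¹)] at h'
  rw [h', imcr]

theorem S12 (hM : IsMoufang L) (h2 : ClassTwo L) (d u c : L) :
    IPLoop.assoc d u c = (IPLoop.assoc u d c)⁻¹ := by
  rw [← F3 h2 d u c, S23 hM h2 c⁻¹ u⁻¹ d⁻¹, F3 h2 u d c]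

theorem cyc (hM : IsMoufang L) (h2 : ClassTwo L) (x y z : L) :
    IPLoop.assoc y z x = IPLoop.assoc x y z := by
  rw [S23 hM h2 y z x, S12 hM h2 y x z, inv_inv]

theorem comm_shift (h2 : ClassTwo L) {k : L} (hk : inCenter k) (x u : L) :
    IPLoop.comm x (u * k) = IPLoop.comm x u := by
  have hC := h2.1 x u
  apply comm_char
  calc x*(u*k) = (x*u)*k := (c_a3 hk x u).symm
    _ = ((u*x)*IPLoop.comm x u)*k := by rw [comm_eq x u]
    _ = ((u*x)*k)*IPLoop.comm x u := cswap hk hC (u*x)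
    _ = ((u*k)*x)*IPLoop.comm x u := by rw [ck1 hk u x]

theorem commExp (h2 : ClassTwo L) (x y z : L) :
    IPLoop.comm x (y * z) =
      (IPLoop.assoc y z x)⁻¹ * (IPLoop.comm x z * (IPLoop.assoc y x z *
        (IPLoop.comm x y * (IPLoop.assoc x y z)⁻¹))) := by
  have hA1 := h2.2 x y z
  have hA2 := h2.2 y x z
  have hA3 := h2.2 y z x
  have hC1 := h2.1 x y
  have hC2 := h2.1 x z
  have hA1i := c_inv hA1
  have hA3i := c_inv hA3
  apply comm_char
  calc x*(y*z)
      = ((x*y)*z) * (IPLoop.assoc x y z)⁻¹ := by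
        rw [assoc_eq x y z, IPLoop.mul_inv_cancel_right]
    _ = (((y*x)*IPLoop.comm x y)*z) * (IPLoop.assoc x y z)⁻¹ := by
        rw [comm_eq x y]
    _ = (((y*x)*z)*IPLoop.comm x y) * (IPLoop.assoc x y z)⁻¹ := by
        rw [ck1 hC1 (y*x) z]
    _ = (((y*(x*z))*IPLoop.assoc y x z)*IPLoop.comm x y) * (IPLoop.assoc x y z)⁻¹ := by
        rw [assoc_eq y x z]
    _ = (((y*((z*x)*IPLoop.comm x z))*IPLoop.assoc y x z)*IPLoop.comm x y) *
          (IPLoop.assoc x y z)⁻¹ := by rw [comm_eq x z]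
    _ = ((((y*(z*x))*IPLoop.comm x z)*IPLoop.assoc y x z)*IPLoop.comm x y) *
          (IPLoop.assoc x y z)⁻¹ := by rw [← c_a3 hC2 y (z*x)]
    _ = (((((y*z)*x)*(IPLoop.assoc y z x)⁻¹*IPLoop.comm x z)*IPLoop.assoc y x z)*
          IPLoop.comm x y) * (IPLoop.assoc x y z)⁻¹ := by
        rw [assoc_eq y z x, IPLoop.mul_inv_cancel_right]
    _ = ((y*z)*x) * ((IPLoop.assoc y z x)⁻¹ * (IPLoop.comm x z *
          (IPLoop.assoc y x z * (IPLoop.comm x y * (IPLoop.assoc x y z)⁻¹)))) := by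
        rw [c_a3 hA1i ((((y*z)*x)*(IPLoop.assoc y z x)⁻¹*IPLoop.comm x z)*IPLoop.assoc y x z)
            (IPLoop.comm x y),
          c_a2 hA2 (((y*z)*x)*(IPLoop.assoc y z x)⁻¹*IPLoop.comm x z)
            (IPLoop.comm x y * (IPLoop.assoc x y z)⁻¹),
          c_a2 hC2 (((y*z)*x)*(IPLoop.assoc y z x)⁻¹)
            (IPLoop.assoc y x z * (IPLoop.comm x y * (IPLoop.assoc x y z)⁻¹)),
          c_a2 hA3i ((y*z)*x)
            (IPLoop.comm x z * (IPLoop.assoc y x z *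
              (IPLoop.comm x y * (IPLoop.assoc x y z)⁻¹)))]

theorem cube_eq (hM : IsMoufang L) (h2 : ClassTwo L) (x y z : L) :
    (IPLoop.assoc x y z)⁻¹ * ((IPLoop.assoc x y z)⁻¹ * (IPLoop.assoc x y z)⁻¹) =
      IPLoop.assoc x y z * (IPLoop.assoc x y z * IPLoop.assoc x y z) := by
  have hA := h2.2 x y z
  have hAi := c_inv hA
  have hC1 := h2.1 x y
  have hC2 := h2.1 x z
  have h1 := commExp h2 x y z
  have h2' := commExp h2 x z y
  have link : IPLoop.comm x (y*z) = IPLoop.comm x (z*y) := by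
    rw [comm_eq y z]
    exact comm_shift h2 (h2.1 y z) x (z*y)
  have E := h1.symm.trans (link.trans h2')
  rw [S12 hM h2 y x z, S23 hM h2 z y x, S23 hM h2 x z y, cyc hM h2 y z x,
    cyc hM h2 x y z, inv_inv] at E
  set A := IPLoop.assoc x y z with hAdef
  set C1 := IPLoop.comm x y with hC1def
  set C2 := IPLoop.comm x z with hC2def
  -- E : A⁻¹ * (C2 * (A⁻¹ * (C1 * A⁻¹))) = A * (C1 * (A * (C2 * A)))
  rw [swapc hC1 A⁻¹ A⁻¹, swapc hC2 A⁻¹ (C1*(A⁻¹*A⁻¹)), swapc hC1 A⁻¹ (A⁻¹*A⁻¹),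
    swapc hC2 A A, swapc hC2 C1 (A*A), swapc hC2 A (C1*(A*A)), swapc hC1 A (A*A)] at E
  exact mlc (mlc E)


theorem assoc_pow_six (hM : IsMoufang L) (h2 : ClassTwo L) (x y z : L) :
    IPLoop.assoc x y z ^ (6:ℕ) = 1 := by
  have hA := h2.2 x y z
  have hAi := c_inv hA
  have hcube := cube_eq hM h2 x y z
  set A := IPLoop.assoc x y z with hAdef
  have key' : (A⁻¹*(A⁻¹*A⁻¹))*(A*(A*A)) = 1 := by
    rw [c_a1 hAi (A⁻¹*A⁻¹) (A*(A*A)), c_a1 hAi A⁻¹ (A*(A*A)),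
      IPLoop.inv_mul_cancel_left, IPLoop.inv_mul_cancel_left, inv_mul]
  rw [hcube] at key'
  have p6 : A ^ (6:ℕ) = A*(A*(A*(A*(A*(A*1))))) := rfl
  rw [IPLoop.mul_one] at p6
  rw [p6]
  rw [c_a1 hA (A*A) (A*(A*A)), c_a1 hA A (A*(A*A))] at key'
  exact key'

/- ### power lemmas for central elements -/

theorem npow_center {a : L} (ha : inCenter a) : ∀ n : ℕ, inCenter (a ^ n)
  | 0 => c_one
  | n+1 => c_mul ha (npow_center ha n)

theorem inv_npow {a : L} (ha : inCenter a) : ∀ n : ℕ, (a⁻¹) ^ n = (a ^ n)⁻¹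
  | 0 => by show (1:L) = (1:L)⁻¹; rw [one_inv]
  | n+1 => by
    show a⁻¹ * (a⁻¹) ^ n = (a * a ^ n)⁻¹
    rw [inv_npow ha n, ← mul_inv_rev (a ^ n) a, c_comm ha (a ^ n)]

theorem mul_npow {a b : L} (ha : inCenter a) (hb : inCenter b) :
    ∀ n : ℕ, (a * b) ^ n = a ^ n * b ^ n
  | 0 => by show (1:L) = 1 * 1; rw [IPLoop.one_mul]
  | n+1 => by
    show (a*b) * ((a*b)^n) = (a * a^n) * (b * b^n)
    rw [mul_npow ha hb n, c_a1 ha b (a^n * b^n), ← c_a2 (npow_center ha n) b (b^n),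
      c_comm (npow_center ha n) b, c_a1 (npow_center ha n) b (b^n),
      ← c_a1 ha (a^n) (b * b^n)]

theorem one_pow6 : (1:L) ^ (6:ℕ) = 1 := by
  show (1:L)*(1*(1*(1*(1*(1*1))))) = 1
  simp only [IPLoop.one_mul]

theorem inv_pow6 {a : L} (ha : inCenter a) (h : a ^ (6:ℕ) = 1) :
    a⁻¹ ^ (6:ℕ) = 1 := by
  rw [inv_npow ha 6, h, one_inv]

theorem mul_pow6 {a b : L} (ha : inCenter a) (hb : inCenter b)
    (h1 : a ^ (6:ℕ) = 1) (h2 : b ^ (6:ℕ) = 1) : (a * b) ^ (6:ℕ) = 1 := by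
  rw [mul_npow ha hb 6, h1, h2, IPLoop.one_mul]

end SAux


open IPLoop in

/-- In a Moufang loop of class at most 2, every associator has order dividing 6,
and the subloop generated by all associators (the nuclearly-derived subloop)
is an abelian group of exponent dividing 6. -/
theorem stmt5 {L : Type*} [IPLoop L] (hM : IsMoufang L) (h2 : ClassTwo L) :
    (∀ c d e : L, assoc c d e ^ (6 : ℕ) = 1) ∧
    (∀ x ∈ subloopClosure {a : L | ∃ c d e : L, a = assoc c d e},
      x ^ (6 : ℕ) = 1) ∧
    (∀ x ∈ subloopClosure {a : L | ∃ c d e : L, a = assoc c d e},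
      ∀ y ∈ subloopClosure {a : L | ∃ c d e : L, a = assoc c d e},
      x * y = y * x) ∧
    (∀ x ∈ subloopClosure {a : L | ∃ c d e : L, a = assoc c d e},
      ∀ y ∈ subloopClosure {a : L | ∃ c d e : L, a = assoc c d e},
      ∀ z ∈ subloopClosure {a : L | ∃ c d e : L, a = assoc c d e},
      (x * y) * z = x * (y * z)) := by
  have part1 : ∀ c d e : L, assoc c d e ^ (6 : ℕ) = 1 := SAux.assoc_pow_six hM h2
  have hmem : ∀ x ∈ subloopClosure {a : L | ∃ c d e : L, a = assoc c d e},
      inCenter x ∧ x ^ (6 : ℕ) = 1 := by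
    intro x hx
    refine Set.mem_sInter.mp hx {t : L | inCenter t ∧ t ^ (6:ℕ) = 1} ?_
    refine ⟨⟨SAux.c_one, SAux.one_pow6⟩, ?_, ?_, ?_⟩
    · rintro a ⟨ha1, ha2⟩
      exact ⟨SAux.c_inv ha1, SAux.inv_pow6 ha1 ha2⟩
    · rintro a ⟨ha1, ha2⟩ b ⟨hb1, hb2⟩
      exact ⟨SAux.c_mul ha1 hb1, SAux.mul_pow6 ha1 hb1 ha2 hb2⟩
    · rintro a ⟨c, d, e, rfl⟩
      exact ⟨h2.2 c d e, part1 c d e⟩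
  exact ⟨part1,
    fun x hx => (hmem x hx).2,
    fun x hx y hy => SAux.c_comm (hmem y hy).1 x,
    fun x hx y hy z hz => SAux.c_a1 (hmem x hx).1 y z⟩
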